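/- arXiv:1504.02991 — 2 statements merged into one kernel-verified Lean document; each statement's English description precedes it below -/
import Mathlib

section
/- The Choi map φ on 3×3 matrices, defined by φ([[a_ij]]) = (1/2) · [[a11+a33, −a12, −a13], [−a21, a22+a11, −a23], [−a31, −a32, a33+a22]], is a positive map: it sends positive semidefinite matrices to positive semidefinite matrices. -/
open Matrix
open scoped ComplexOrder

/-- The Choi map `φ` on 3×3 complex matrices. -/
noncomputable def choiPhi (a : Matrix (Fin 3) (Fin 3) ℂ) : Matrix (Fin 3) (Fin 3) ℂ :=
  (1 / 2 : ℂ) •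
    !![a 0 0 + a 2 2, -a 0 1, -a 0 2;
       -a 1 0, a 1 1 + a 0 0, -a 1 2;
       -a 2 0, -a 2 1, a 2 2 + a 1 1]

private lemma choi_key_real (p0 p1 p2 q0 q1 q2 : ℝ) :
    (p0*q0 + p1*q1 + p2*q2)^2 ≤
      (2*p0^2+p1^2)*q0^2 + (2*p1^2+p2^2)*q1^2 + (2*p2^2+p0^2)*q2^2 := by
  nlinarith [sq_nonneg (p0*q0 - p1*q1), sq_nonneg (p1*q1 - p2*q2), sq_nonneg (p0*q0 - p2*q2),
    sq_nonneg (p1*q0 - p0*q1), sq_nonneg (p2*q1 - p1*q2), sq_nonneg (p0*q2 - p2*q0)]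

private lemma choi_key_term (b0 b1 b2 x0 x1 x2 : ℂ) :
    ‖b0*x0 + b1*x1 + b2*x2‖^2 ≤
      (2*‖x0‖^2+‖x1‖^2)*‖b0‖^2 + (2*‖x1‖^2+‖x2‖^2)*‖b1‖^2 + (2*‖x2‖^2+‖x0‖^2)*‖b2‖^2 := by
  have h : ‖b0*x0 + b1*x1 + b2*x2‖ ≤ ‖x0‖*‖b0‖ + ‖x1‖*‖b1‖ + ‖x2‖*‖b2‖ := by
    calc ‖b0*x0 + b1*x1 + b2*x2‖ ≤ ‖b0*x0 + b1*x1‖ + ‖b2*x2‖ := norm_add_le _ _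
      _ ≤ ‖b0*x0‖ + ‖b1*x1‖ + ‖b2*x2‖ := by gcongr; exact norm_add_le _ _
      _ = ‖x0‖*‖b0‖ + ‖x1‖*‖b1‖ + ‖x2‖*‖b2‖ := by simp [norm_mul]; ring
  have h2 := choi_key_real ‖x0‖ ‖x1‖ ‖x2‖ ‖b0‖ ‖b1‖ ‖b2‖
  nlinarith [norm_nonneg (b0*x0 + b1*x1 + b2*x2), norm_nonneg x0, norm_nonneg x1, norm_nonneg x2,
    norm_nonneg b0, norm_nonneg b1, norm_nonneg b2]

/-- the Choi map `φ` is a positive map. -/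
theorem choiPhi_positive (A : Matrix (Fin 3) (Fin 3) ℂ) (hA : A.PosSemidef) :
    (choiPhi A).PosSemidef := by
  open MatrixOrder in obtain ⟨B, hB⟩ := CStarAlgebra.nonneg_iff_eq_star_mul_self.mp hA.nonneg
  refine posSemidef_iff_dotProduct_mulVec.mpr ⟨?_, ?_⟩
  · have ha : ∀ i j, (starRingEnd ℂ) (A i j) = A j i := fun i j => congrFun (congrFun hA.1 j) i
    show (choiPhi A)ᴴ = choiPhi A
    ext i j
    rw [Matrix.conjTranspose_apply]
    fin_cases i <;> fin_cases j <;>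
      simp [choiPhi, Complex.star_def, ha, map_ofNat]
  · intro x
    have hAe : ∀ i j, A i j = ∑ k, (starRingEnd ℂ) (B k i) * B k j := by
      intro i j
      rw [hB, Matrix.mul_apply]
      simp [Matrix.star_eq_conjTranspose, Matrix.conjTranspose_apply, Complex.star_def]
    have norm2 : ∀ z : ℂ, ((‖z‖^2 : ℝ) : ℂ) = z * (starRingEnd ℂ) z := by
      intro z; rw [Complex.sq_norm, Complex.mul_conj]
    have hQF : star x ⬝ᵥ (choiPhi A *ᵥ x)
        = (1/2 : ℂ) * ∑ k : Fin 3,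
            (((2*‖x 0‖^2+‖x 1‖^2)*‖B k 0‖^2 + (2*‖x 1‖^2+‖x 2‖^2)*‖B k 1‖^2
              + (2*‖x 2‖^2+‖x 0‖^2)*‖B k 2‖^2
              - ‖B k 0 * x 0 + B k 1 * x 1 + B k 2 * x 2‖^2 : ℝ) : ℂ) := by
      push_cast [norm2]
      simp only [choiPhi, Matrix.mulVec, dotProduct, Fin.sum_univ_three,
        Matrix.smul_apply, smul_eq_mul, Pi.star_apply, Complex.star_def, hAe,
        Matrix.cons_val', Matrix.cons_val_zero, Matrix.cons_val_one, Matrix.head_cons,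
        Matrix.empty_val', Matrix.cons_val_fin_one, Matrix.head_fin_const,
        Matrix.of_apply, Matrix.cons_val_two, Matrix.tail_cons,
        _root_.map_add, _root_.map_mul, map_neg]
      ring
    rw [hQF]
    refine mul_nonneg (by rw [show ((1:ℂ)/2) = ((1/2 : ℝ) : ℂ) by norm_num, Complex.zero_le_real]; norm_num) (Finset.sum_nonneg fun k _ => ?_)
    rw [Complex.zero_le_real, sub_nonneg]
    exact choi_key_term (B k 0) (B k 1) (B k 2) (x 0) (x 1) (x 2)
end

section
/- The Choi map φ on 3×3 matrices is not completely positive: the operator (φ⊗id_3) applied to the (unnormalized) maximally entangled projector Σ_{i,j} |ii⟩⟨jj| on ℂ^3⊗ℂ^3 has a negative eigenvalue. -/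
open Matrix
open scoped ComplexOrder

/-- `φ ⊗ id`: apply `φ` to the first tensor factor of an operator on `ℂ^3 ⊗ ℂ^3`. -/
noncomputable def phiFst (ρ : Matrix (Fin 3 × Fin 3) (Fin 3 × Fin 3) ℂ) :
    Matrix (Fin 3 × Fin 3) (Fin 3 × Fin 3) ℂ :=
  Matrix.of fun p q => choiPhi (Matrix.of fun i j => ρ (i, p.2) (j, q.2)) p.1 q.1

/-- The unnormalized maximally entangled projector `Σ_{i,j} |ii⟩⟨jj|` on `ℂ^3 ⊗ ℂ^3`. -/
def maxEnt : Matrix (Fin 3 × Fin 3) (Fin 3 × Fin 3) ℂ :=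
  Matrix.of fun p q => if p.1 = p.2 ∧ q.1 = q.2 then 1 else 0

lemma choiAux_herm : (phiFst maxEnt).IsHermitian := by
  rw [Matrix.IsHermitian]
  ext ⟨i1,i2⟩ ⟨j1,j2⟩
  simp only [conjTranspose_apply, phiFst, choiPhi, maxEnt, Matrix.of_apply, Matrix.smul_apply]
  fin_cases i1 <;> fin_cases i2 <;> fin_cases j1 <;> fin_cases j2 <;>
    simp [Matrix.vecHead, Matrix.vecTail]

lemma choiAux_notPSD : ¬ (phiFst maxEnt).PosSemidef := by
  intro hP
  have := hP.dotProduct_mulVec_nonneg (fun p : Fin 3 × Fin 3 => if p.1 = p.2 then (1 : ℂ) else 0)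
  simp [dotProduct, mulVec, Fintype.sum_prod_type, Fin.sum_univ_three,
    phiFst, choiPhi, maxEnt] at this
  rw [Complex.le_def] at this
  norm_num at this

/-- the Choi map is not completely positive: `(φ ⊗ id)` applied to the
maximally entangled projector has a negative eigenvalue. -/
theorem choiPhi_not_completely_positive :
    ∃ (h : (phiFst maxEnt).IsHermitian) (i : Fin 3 × Fin 3), h.eigenvalues i < 0 := by
  refine ⟨choiAux_herm, ?_⟩
  by_contra hc
  push_neg at hc
  exact choiAux_notPSD ((Matrix.IsHermitian.posSemidef_iff_eigenvalues_nonneg choiAux_herm).mpr fun i => hc i)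
end
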